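/- Assume (i) E_{(x,a)∼ν}[|Δ(x,a)|] ≤ δ_Δ, (ii) |1−ρ_k(x,a)| ≤ δ_ρ almost surely for all k, (iii) E_{(x,a)∼ν}[ E_{r∼D(·|x,a)}[(r̂(x,a)−r)²] ] ≤ e_r̂ almost surely, and (iv) ρ_k(x,a) ≤ ρ_max almost surely. Then for each k, |E_k[V̂_k] − V| ≤ δ_ρ·δ_Δ and Var_k[V̂_k] ≤ Var_{x∼D}[r*(x,ν)] + 2δ_ρ δ_Δ + M ρ_max e_r̂, where M bounds ν(a|x)/μ̂_k(a|x). -/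

import Mathlib

open Finset

lemma aux_expand {ι : Type*} [Fintype ι] (p f : ι → ℝ) (c : ℝ) (hp1 : ∑ i, p i = 1) :
    ∑ i, p i * (f i - c)^2 = (∑ i, p i * (f i)^2) - 2*c*(∑ i, p i * f i) + c^2 := by
  have h : ∀ i ∈ Finset.univ, p i * (f i - c)^2
      = p i * (f i)^2 - (2*c)*(p i * f i) + (c^2) * p i := fun i _ => by ring
  rw [Finset.sum_congr rfl h, Finset.sum_add_distrib, Finset.sum_sub_distrib,
    ← Finset.mul_sum, ← Finset.mul_sum, hp1, mul_one]

lemma aux_var_le {ι : Type*} [Fintype ι] (p f : ι → ℝ) (c : ℝ) (hp1 : ∑ i, p i = 1) :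
    (∑ i, p i * (f i)^2) - (∑ i, p i * f i)^2 ≤ ∑ i, p i * (f i - c)^2 := by
  rw [aux_expand p f c hp1]
  nlinarith [sq_nonneg ((∑ i, p i * f i) - c)]

set_option maxHeartbeats 2000000 in
/-- Per-term bias and variance bounds for the doubly robust term under moment and
ratio assumptions (Lemma 3.4). -/
theorem stmt7 {X A R : Type*} [Fintype X] [Fintype A] [Fintype R]
    (D : X → ℝ) (nu : X → A → ℝ) (mu : X → A → ℝ)
    (Dr : X → A → R → ℝ) (rval : R → ℝ)
    (rhat : X → A → ℝ) (muhat : X → A → ℝ)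
    (M δΔ δρ ρmax e : ℝ)
    (hD0 : ∀ x, 0 ≤ D x) (hD1 : ∑ x, D x = 1)
    (hnu0 : ∀ x a, 0 ≤ nu x a) (hnu1 : ∀ x, ∑ a, nu x a = 1)
    (hmu0 : ∀ x a, 0 ≤ mu x a) (hmu1 : ∀ x, ∑ a, mu x a = 1)
    (hDr0 : ∀ x a r, 0 ≤ Dr x a r) (hDr1 : ∀ x a, ∑ r, Dr x a r = 1)
    (hrval0 : ∀ r, 0 ≤ rval r) (hrval1 : ∀ r, rval r ≤ 1)
    (hrhat0 : ∀ x a, 0 ≤ rhat x a) (hrhat1 : ∀ x a, rhat x a ≤ 1)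
    (hmuhat : ∀ x a, 0 < muhat x a)
    (hpos : ∀ x a, 0 < nu x a → 0 < mu x a)
    (rstar : X → A → ℝ) (hrstar : ∀ x a, rstar x a = ∑ r, Dr x a r * rval r)
    (Δ : X → A → ℝ) (hΔ : ∀ x a, Δ x a = rhat x a - rstar x a)
    (ρ : X → A → ℝ) (hρ : ∀ x a, ρ x a = mu x a / muhat x a)
    (rnux : X → ℝ) (hrnux : ∀ x, rnux x = ∑ a, nu x a * rstar x a)
    (V : ℝ) (hV : V = ∑ x, ∑ a, D x * (nu x a * rstar x a))
    (Vhat : X → A → R → ℝ)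
    (hVhat : ∀ x a r, Vhat x a r =
      (∑ a', nu x a' * rhat x a') + (nu x a / muhat x a) * (rval r - rhat x a))
    -- Assumptions 1 and 2
    (hδΔ : ∑ x, ∑ a, D x * (nu x a * |Δ x a|) ≤ δΔ)
    (hδρ : ∀ x a, |1 - ρ x a| ≤ δρ)
    (he : ∑ x, ∑ a, D x * (nu x a * ∑ r, Dr x a r * (rhat x a - rval r)^2) ≤ e)
    (hρmax : ∀ x a, ρ x a ≤ ρmax)
    (hM : ∀ x a, nu x a / muhat x a ≤ M) :
    |(∑ x, ∑ a, ∑ r, D x * (mu x a * (Dr x a r * Vhat x a r))) - V| ≤ δρ * δΔ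
    ∧ (∑ x, ∑ a, ∑ r, D x * (mu x a * (Dr x a r * (Vhat x a r)^2)))
        - (∑ x, ∑ a, ∑ r, D x * (mu x a * (Dr x a r * Vhat x a r)))^2
      ≤ ((∑ x, D x * (rnux x)^2) - (∑ x, D x * rnux x)^2)
        + 2 * (δρ * δΔ) + M * (ρmax * e) := by
  -- nonemptiness
  have hXne : Nonempty X := by
    by_contra h
    rw [not_nonempty_iff] at h
    rw [Finset.univ_eq_empty, Finset.sum_empty] at hD1
    norm_num at hD1
  obtain ⟨x₀⟩ := hXne
  have hAne : Nonempty A := by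
    by_contra h
    rw [not_nonempty_iff] at h
    have h1 := hnu1 x₀
    rw [Finset.univ_eq_empty, Finset.sum_empty] at h1
    norm_num at h1
  obtain ⟨a₀⟩ := hAne
  -- definitions
  set c : ℝ := ∑ x, D x * rnux x with hc_def
  set Cx : X → ℝ := fun x => ∑ a, nu x a * rhat x a with hCx_def
  set d : X → ℝ := fun x => ∑ a, nu x a * Δ x a with hd_def
  set m : X → ℝ := fun x => ∑ a, ρ x a * (nu x a * Δ x a) with hm_def
  set t : X → ℝ := fun x => ∑ a, nu x a * |Δ x a| with ht_def
  set I : X → A → ℝ := fun x a => ∑ r, Dr x a r * (rhat x a - rval r)^2 with hI_def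
  set S : X → ℝ := fun x => ∑ a, mu x a * (nu x a / muhat x a)^2 * I x a with hS_def
  clear_value c Cx d m t I S
  -- basic nonnegativity facts
  have hμhne : ∀ x a, muhat x a ≠ 0 := fun x a => (hmuhat x a).ne'
  have hw0 : ∀ x a, 0 ≤ nu x a / muhat x a :=
    fun x a => div_nonneg (hnu0 x a) (hmuhat x a).le
  have hρ0 : ∀ x a, 0 ≤ ρ x a := by
    intro x a; rw [hρ]; exact div_nonneg (hmu0 x a) (hmuhat x a).le
  have hδρ0 : 0 ≤ δρ := le_trans (abs_nonneg _) (hδρ x₀ a₀)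
  have hρmax0 : 0 ≤ ρmax := le_trans (hρ0 x₀ a₀) (hρmax x₀ a₀)
  have hM0 : 0 ≤ M := le_trans (hw0 x₀ a₀) (hM x₀ a₀)
  have hrstar0 : ∀ x a, 0 ≤ rstar x a := by
    intro x a; rw [hrstar]
    exact Finset.sum_nonneg fun r _ => mul_nonneg (hDr0 x a r) (hrval0 r)
  have hrstar1 : ∀ x a, rstar x a ≤ 1 := by
    intro x a; rw [hrstar]
    calc ∑ r, Dr x a r * rval r ≤ ∑ r, Dr x a r * 1 :=
          Finset.sum_le_sum fun r _ =>
            mul_le_mul_of_nonneg_left (hrval1 r) (hDr0 x a r)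
      _ = 1 := by simp [hDr1 x a]
  have hrnux0 : ∀ x, 0 ≤ rnux x := by
    intro x; rw [hrnux]
    exact Finset.sum_nonneg fun a _ => mul_nonneg (hnu0 x a) (hrstar0 x a)
  have hrnux1 : ∀ x, rnux x ≤ 1 := by
    intro x; rw [hrnux]
    calc ∑ a, nu x a * rstar x a ≤ ∑ a, nu x a * 1 :=
          Finset.sum_le_sum fun a _ =>
            mul_le_mul_of_nonneg_left (hrstar1 x a) (hnu0 x a)
      _ = 1 := by simp [hnu1 x]
  have hc0 : 0 ≤ c := by
    rw [hc_def]
    exact Finset.sum_nonneg fun x _ => mul_nonneg (hD0 x) (hrnux0 x)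
  have hc1 : c ≤ 1 := by
    rw [hc_def]
    calc ∑ x, D x * rnux x ≤ ∑ x, D x * 1 :=
          Finset.sum_le_sum fun x _ =>
            mul_le_mul_of_nonneg_left (hrnux1 x) (hD0 x)
      _ = 1 := by simp [hD1]
  have hCx0 : ∀ x, 0 ≤ Cx x := by
    intro x; rw [hCx_def]
    exact Finset.sum_nonneg fun a _ => mul_nonneg (hnu0 x a) (hrhat0 x a)
  have hCx1 : ∀ x, Cx x ≤ 1 := by
    intro x; rw [hCx_def]
    calc ∑ a, nu x a * rhat x a ≤ ∑ a, nu x a * 1 :=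
          Finset.sum_le_sum fun a _ =>
            mul_le_mul_of_nonneg_left (hrhat1 x a) (hnu0 x a)
      _ = 1 := by simp [hnu1 x]
  have ht0 : ∀ x, 0 ≤ t x := by
    intro x; rw [ht_def]
    exact Finset.sum_nonneg fun a _ => mul_nonneg (hnu0 x a) (abs_nonneg _)
  have hI0 : ∀ x a, 0 ≤ I x a := by
    intro x a; rw [hI_def]
    exact Finset.sum_nonneg fun r _ => mul_nonneg (hDr0 x a r) (sq_nonneg _)
  -- C = rnux + d
  have hC : ∀ x, Cx x = rnux x + d x := by
    intro x
    rw [hCx_def, hd_def, hrnux, ← Finset.sum_add_distrib]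
    exact Finset.sum_congr rfl fun a _ => by rw [hΔ]; ring
  -- inner sum over r of Vhat
  have keyInnerR : ∀ x a, (∑ r, Dr x a r * Vhat x a r)
      = Cx x + (nu x a / muhat x a) * (rstar x a - rhat x a) := by
    intro x a
    have h : ∀ r ∈ Finset.univ, Dr x a r * Vhat x a r
        = (Cx x) * Dr x a r + ((nu x a / muhat x a)) * (Dr x a r * rval r)
          - ((nu x a / muhat x a) * rhat x a) * Dr x a r := by
      intro r _; rw [hVhat, hCx_def]; ring
    rw [Finset.sum_congr rfl h, Finset.sum_sub_distrib, Finset.sum_add_distrib,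
      ← Finset.mul_sum, ← Finset.mul_sum, ← Finset.mul_sum, hDr1, ← hrstar]
    ring
  -- inner sum over r of Vhat^2
  have keyInnerR2 : ∀ x a, (∑ r, Dr x a r * (Vhat x a r)^2)
      = (Cx x)^2 + (2 * Cx x * (nu x a / muhat x a)) * (rstar x a - rhat x a)
        + (nu x a / muhat x a)^2 * I x a := by
    intro x a
    have h : ∀ r ∈ Finset.univ, Dr x a r * (Vhat x a r)^2
        = ((Cx x)^2) * Dr x a r
          + (2 * Cx x * (nu x a / muhat x a)) * (Dr x a r * rval r)
          - (2 * Cx x * (nu x a / muhat x a) * rhat x a) * Dr x a r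
          + ((nu x a / muhat x a)^2) * (Dr x a r * (rhat x a - rval r)^2) := by
      intro r _; rw [hVhat, hCx_def]; ring
    rw [Finset.sum_congr rfl h, Finset.sum_add_distrib, Finset.sum_sub_distrib,
      Finset.sum_add_distrib, ← Finset.mul_sum, ← Finset.mul_sum, ← Finset.mul_sum,
      ← Finset.mul_sum, hDr1, ← hrstar, hI_def]
    ring
  -- expectation over a
  have keyA : ∀ x, (∑ a, mu x a * ∑ r, Dr x a r * Vhat x a r)
      = rnux x + (d x - m x) := by
    intro x
    have h : ∀ a ∈ Finset.univ, mu x a * ∑ r, Dr x a r * Vhat x a r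
        = (Cx x) * mu x a - ρ x a * (nu x a * Δ x a) := by
      intro a _
      rw [keyInnerR, hρ, hΔ]
      field_simp
      ring
    rw [Finset.sum_congr rfl h, Finset.sum_sub_distrib, ← Finset.mul_sum, hmu1,
      mul_one, hC, hm_def]
    ring
  have keyB : ∀ x, (∑ a, mu x a * ∑ r, Dr x a r * (Vhat x a r)^2)
      = (rnux x + (d x - m x))^2 - (m x)^2 + S x := by
    intro x
    have h : ∀ a ∈ Finset.univ, mu x a * ∑ r, Dr x a r * (Vhat x a r)^2
        = ((Cx x)^2) * mu x a - (2 * Cx x) * (ρ x a * (nu x a * Δ x a))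
          + mu x a * (nu x a / muhat x a)^2 * I x a := by
      intro a _
      rw [keyInnerR2, hρ, hΔ]
      field_simp
      ring
    rw [Finset.sum_congr rfl h, Finset.sum_add_distrib, Finset.sum_sub_distrib,
      ← Finset.mul_sum, ← Finset.mul_sum, hmu1, mul_one, hC, hm_def, hS_def]
    ring
  -- triple sum identities
  have hE1 : (∑ x, ∑ a, ∑ r, D x * (mu x a * (Dr x a r * Vhat x a r)))
      = ∑ x, D x * (rnux x + (d x - m x)) := by
    simp only [← Finset.mul_sum]
    exact Finset.sum_congr rfl fun x _ => by rw [keyA x]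
  have hE2 : (∑ x, ∑ a, ∑ r, D x * (mu x a * (Dr x a r * (Vhat x a r)^2)))
      = ∑ x, D x * ((rnux x + (d x - m x))^2 - (m x)^2 + S x) := by
    simp only [← Finset.mul_sum]
    exact Finset.sum_congr rfl fun x _ => by rw [keyB x]
  -- V as expectation of rnux
  have hV' : V = ∑ x, D x * rnux x := by
    rw [hV]
    exact Finset.sum_congr rfl fun x _ => by rw [hrnux, Finset.mul_sum]
  -- bias control
  have habs_b : ∀ x, |d x - m x| ≤ δρ * t x := by
    intro x
    rw [hd_def, hm_def, ht_def, ← Finset.sum_sub_distrib]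
    calc |∑ a, (nu x a * Δ x a - ρ x a * (nu x a * Δ x a))|
        ≤ ∑ a, |nu x a * Δ x a - ρ x a * (nu x a * Δ x a)| :=
          Finset.abs_sum_le_sum_abs _ _
      _ ≤ ∑ a, δρ * (nu x a * |Δ x a|) := by
          apply Finset.sum_le_sum
          intro a _
          have h1 : nu x a * Δ x a - ρ x a * (nu x a * Δ x a)
              = (nu x a * Δ x a) * (1 - ρ x a) := by ring
          rw [h1, abs_mul, abs_mul, abs_of_nonneg (hnu0 x a)]
          calc nu x a * |Δ x a| * |1 - ρ x a| ≤ nu x a * |Δ x a| * δρ :=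
                mul_le_mul_of_nonneg_left (hδρ x a)
                  (mul_nonneg (hnu0 x a) (abs_nonneg _))
            _ = δρ * (nu x a * |Δ x a|) := by ring
      _ = δρ * ∑ a, nu x a * |Δ x a| := by rw [Finset.mul_sum]
  have hDt : ∑ x, D x * t x ≤ δΔ := by
    calc ∑ x, D x * t x = ∑ x, ∑ a, D x * (nu x a * |Δ x a|) := by
          exact Finset.sum_congr rfl fun x _ => by rw [ht_def, Finset.mul_sum]
      _ ≤ δΔ := hδΔ
  have hδΔ0 : 0 ≤ δΔ := by
    refine le_trans ?_ hDt
    exact Finset.sum_nonneg fun x _ => mul_nonneg (hD0 x) (ht0 x)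
  have hDb : |∑ x, D x * (d x - m x)| ≤ δρ * δΔ := by
    calc |∑ x, D x * (d x - m x)| ≤ ∑ x, |D x * (d x - m x)| :=
          Finset.abs_sum_le_sum_abs _ _
      _ ≤ ∑ x, D x * (δρ * t x) := by
          apply Finset.sum_le_sum
          intro x _
          rw [abs_mul, abs_of_nonneg (hD0 x)]
          exact mul_le_mul_of_nonneg_left (habs_b x) (hD0 x)
      _ = δρ * ∑ x, D x * t x := by
          rw [Finset.mul_sum]
          exact Finset.sum_congr rfl fun x _ => by ring
      _ ≤ δρ * δΔ := mul_le_mul_of_nonneg_left hDt hδρ0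
  constructor
  · -- bias bound
    rw [hE1]
    have h1 : (∑ x, D x * (rnux x + (d x - m x))) - V = ∑ x, D x * (d x - m x) := by
      rw [hV', ← Finset.sum_sub_distrib]
      exact Finset.sum_congr rfl fun x _ => by ring
    rw [h1]
    exact hDb
  · -- variance bound
    rw [hE1, hE2]
    -- split off the S - m^2 part
    have e1 : ∑ x, D x * ((rnux x + (d x - m x))^2 - (m x)^2 + S x)
        = (∑ x, D x * (rnux x + (d x - m x))^2)
          + ∑ x, D x * (S x - (m x)^2) := by
      rw [← Finset.sum_add_distrib]
      exact Finset.sum_congr rfl fun x _ => by ring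
    have hvarle := aux_var_le D (fun x => rnux x + (d x - m x)) c hD1
    -- pointwise bound on the centered second moment
    have hpt : ∀ x ∈ Finset.univ,
        D x * ((rnux x + (d x - m x) - c)^2 + (S x - (m x)^2))
        ≤ D x * (rnux x - c)^2 + (2*δρ)*(D x * t x)
          + (M * ρmax) * (D x * ∑ a, nu x a * I x a) := by
      intro x _
      have hid : (rnux x + (d x - m x) - c)^2 - (m x)^2
          = (rnux x - c)^2 + 2*((rnux x - c + d x)*(d x - m x)) - (d x)^2 := by ring
      have habs1 : |rnux x - c + d x| ≤ 1 := by
        have hCd : rnux x + d x = Cx x := (hC x).symm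
        rw [abs_le]
        constructor
        · linarith [hCx0 x, hc1]
        · linarith [hCx1 x, hc0]
      have h1 : (rnux x - c + d x)*(d x - m x) ≤ δρ * t x := by
        calc (rnux x - c + d x)*(d x - m x) ≤ |(rnux x - c + d x)*(d x - m x)| :=
              le_abs_self _
          _ = |rnux x - c + d x| * |d x - m x| := abs_mul _ _
          _ ≤ 1 * (δρ * t x) :=
              mul_le_mul habs1 (habs_b x) (abs_nonneg _) zero_le_one
          _ = δρ * t x := one_mul _
      have h2 : S x ≤ (M * ρmax) * (∑ a, nu x a * I x a) := by
        rw [hS_def, Finset.mul_sum]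
        apply Finset.sum_le_sum
        intro a _
        have hρw : ρ x a * (nu x a / muhat x a) ≤ ρmax * M := by
          nlinarith [hρmax x a, hM x a, hρ0 x a, hw0 x a, hρmax0]
        have heq : mu x a * (nu x a / muhat x a)^2 * I x a
            = (ρ x a * (nu x a / muhat x a)) * (nu x a * I x a) := by
          rw [hρ]
          field_simp
        rw [heq]
        calc (ρ x a * (nu x a / muhat x a)) * (nu x a * I x a)
            ≤ (ρmax * M) * (nu x a * I x a) :=
              mul_le_mul_of_nonneg_right hρw (mul_nonneg (hnu0 x a) (hI0 x a))
          _ = (M * ρmax) * (nu x a * I x a) := by ring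
      have hcore : (rnux x + (d x - m x) - c)^2 + (S x - (m x)^2)
          ≤ (rnux x - c)^2 + 2*(δρ * t x) + (M * ρmax) * (∑ a, nu x a * I x a) := by
        linarith [h1, h2, sq_nonneg (d x), hid]
      calc D x * ((rnux x + (d x - m x) - c)^2 + (S x - (m x)^2))
          ≤ D x * ((rnux x - c)^2 + 2*(δρ * t x)
              + (M * ρmax) * (∑ a, nu x a * I x a)) :=
            mul_le_mul_of_nonneg_left hcore (hD0 x)
        _ = D x * (rnux x - c)^2 + (2*δρ)*(D x * t x)
              + (M * ρmax) * (D x * ∑ a, nu x a * I x a) := by ring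
    have hsum_pt := Finset.sum_le_sum hpt
    have hsplit : ∑ x, (D x * (rnux x - c)^2 + (2*δρ)*(D x * t x)
          + (M * ρmax) * (D x * ∑ a, nu x a * I x a))
        = (∑ x, D x * (rnux x - c)^2) + (2*δρ)*(∑ x, D x * t x)
          + (M * ρmax) * (∑ x, D x * ∑ a, nu x a * I x a) := by
      rw [Finset.sum_add_distrib, Finset.sum_add_distrib, ← Finset.mul_sum, ← Finset.mul_sum]
    have hcent : ∑ x, D x * ((rnux x + (d x - m x)) - c)^2 + ∑ x, D x * (S x - (m x)^2)
        = ∑ x, D x * ((rnux x + (d x - m x) - c)^2 + (S x - (m x)^2)) := by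
      rw [← Finset.sum_add_distrib]
      exact Finset.sum_congr rfl fun x _ => by ring
    have hexp := aux_expand D rnux c hD1
    rw [← hc_def] at hexp
    have hIe : ∑ x, D x * ∑ a, nu x a * I x a ≤ e := by
      calc ∑ x, D x * ∑ a, nu x a * I x a
          = ∑ x, ∑ a, D x * (nu x a * ∑ r, Dr x a r * (rhat x a - rval r)^2) := by
            apply Finset.sum_congr rfl; intro x _
            rw [Finset.mul_sum, hI_def]
        _ ≤ e := he
    have hMρ0 : 0 ≤ M * ρmax := mul_nonneg hM0 hρmax0
    have h2t : (2*δρ) * (∑ x, D x * t x) ≤ (2*δρ) * δΔ :=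
      mul_le_mul_of_nonneg_left hDt (by linarith)
    have hIe2 : (M * ρmax) * (∑ x, D x * ∑ a, nu x a * I x a) ≤ (M * ρmax) * e :=
      mul_le_mul_of_nonneg_left hIe hMρ0
    linarith [hvarle, hsum_pt, hexp, h2t, hIe2, e1, hcent, hsplit]
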